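/- arXiv:1903.08566 — 9 statements merged into one kernel-verified Lean document; each statement's English description precedes it below -/
import Mathlib

section
/- For all real constants a₀ > 0, β > 0, and a₂ ∈ ℝ, the function (p, y) ↦ a₀·exp(a₂·y)/log(1 + β·exp(p)) is convex on ℝ² (jointly in the pair (p, y)). -/
open Real Set

private lemma one_add_pos' {β : ℝ} (hβ : 0 < β) (p : ℝ) : 0 < 1 + β * Real.exp p := by
  positivity

private lemma L_pos {β : ℝ} (hβ : 0 < β) (p : ℝ) : 0 < Real.log (1 + β * Real.exp p) :=
  Real.log_pos (by nlinarith [Real.exp_pos p])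

private lemma hasDerivAt_L {β : ℝ} (hβ : 0 < β) (p : ℝ) :
    HasDerivAt (fun p => Real.log (1 + β * Real.exp p))
      ((β * Real.exp p) / (1 + β * Real.exp p)) p := by
  have h1 : HasDerivAt (fun p => 1 + β * Real.exp p) (β * Real.exp p) p :=
    ((Real.hasDerivAt_exp p).const_mul β).const_add 1
  exact h1.log (one_add_pos' hβ p).ne'

private lemma hasDerivAt_phi {β : ℝ} (hβ : 0 < β) (p : ℝ) :
    HasDerivAt (fun p => Real.log (Real.log (1 + β * Real.exp p)))
      ((β * Real.exp p / (1 + β * Real.exp p)) / Real.log (1 + β * Real.exp p)) p :=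
  (hasDerivAt_L hβ p).log (L_pos hβ p).ne'

/-- `g u = (1 - e^{-u})/u` is antitone on `(0, ∞)`. -/
private lemma g_antitone : AntitoneOn (fun u : ℝ => (1 - Real.exp (-u)) / u) (Ioi 0) := by
  have hderiv : ∀ u : ℝ, 0 < u →
      HasDerivAt (fun u : ℝ => (1 - Real.exp (-u)) / u)
        ((u * Real.exp (-u) - (1 - Real.exp (-u))) / u ^ 2) u := by
    intro u hu
    have h1 : HasDerivAt (fun u : ℝ => 1 - Real.exp (-u)) (Real.exp (-u)) u := by
      simpa using ((Real.hasDerivAt_exp (-u)).comp u (hasDerivAt_neg u)).const_sub 1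
    have h2 := h1.div (hasDerivAt_id u) hu.ne'
    refine h2.congr_deriv ?_
    simp only [id]
    ring
  apply antitoneOn_of_deriv_nonpos (convex_Ioi 0)
  · exact fun u hu => ((hderiv u hu).continuousAt).continuousWithinAt
  · intro u hu
    rw [interior_Ioi] at hu
    exact (hderiv u hu).differentiableAt.differentiableWithinAt
  · intro u hu
    rw [interior_Ioi] at hu
    rw [(hderiv u hu).deriv]
    apply div_nonpos_of_nonpos_of_nonneg _ (sq_nonneg u)
    have key : u + 1 ≤ Real.exp u := Real.add_one_le_exp u
    have h3 : (u + 1) * Real.exp (-u) ≤ 1 := by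
      have := mul_le_mul_of_nonneg_right key (Real.exp_nonneg (-u))
      rwa [← Real.exp_add, add_neg_cancel, Real.exp_zero] at this
    nlinarith [Real.exp_nonneg (-u)]

/-- The derivative of `φ` at `p` equals `g (L p)`. -/
private lemma deriv_phi_eq {β : ℝ} (hβ : 0 < β) (p : ℝ) :
    deriv (fun p => Real.log (Real.log (1 + β * Real.exp p))) p
      = (1 - Real.exp (-(Real.log (1 + β * Real.exp p)))) / Real.log (1 + β * Real.exp p) := by
  rw [(hasDerivAt_phi hβ p).deriv]
  have h0 := one_add_pos' hβ p
  rw [Real.exp_neg, Real.exp_log h0]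
  congr 1
  field_simp
  ring

private lemma phi_concave {β : ℝ} (hβ : 0 < β) :
    ConcaveOn ℝ univ (fun p => Real.log (Real.log (1 + β * Real.exp p))) := by
  apply Antitone.concaveOn_univ_of_deriv
  · exact fun p => (hasDerivAt_phi hβ p).differentiableAt
  · intro p q hpq
    rw [deriv_phi_eq hβ, deriv_phi_eq hβ]
    have hL : Real.log (1 + β * Real.exp p) ≤ Real.log (1 + β * Real.exp q) := by
      apply Real.log_le_log (one_add_pos' hβ p)
      have := Real.exp_le_exp.2 hpq
      nlinarith
    exact g_antitone (L_pos hβ p) (L_pos hβ q) hL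

/-- Joint convexity of `(p, y) ↦ a₀·e^{a₂ y} / log(1 + β e^{p})` on `ℝ²`
(the case `a₁ = 0` in Proposition 2 of the paper). -/
theorem convexOn_exp_div_log_one_add_exp (a₀ β a₂ : ℝ) (ha₀ : 0 < a₀) (hβ : 0 < β) :
    ConvexOn ℝ (Set.univ : Set (ℝ × ℝ))
      (fun q : ℝ × ℝ => a₀ * Real.exp (a₂ * q.2) / Real.log (1 + β * Real.exp q.1)) := by
  set φ : ℝ → ℝ := fun p => Real.log (Real.log (1 + β * Real.exp p)) with hφ
  set F : ℝ × ℝ → ℝ := fun q => a₂ * q.2 + (-φ q.1) with hFdef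
  -- F is convex
  have t1 : ConvexOn ℝ (univ : Set (ℝ × ℝ)) (fun q : ℝ × ℝ => a₂ * q.2) := by
    refine ⟨convex_univ, fun x _ y _ a b ha hb hab => ?_⟩
    simp only [Prod.smul_snd, smul_eq_mul, Prod.snd_add]
    exact le_of_eq (by ring)
  have t2 : ConvexOn ℝ (univ : Set (ℝ × ℝ)) (fun q : ℝ × ℝ => -φ q.1) := by
    have hneg : ConvexOn ℝ univ (fun p => -φ p) := (phi_concave hβ).neg
    have := hneg.comp_affineMap (LinearMap.fst ℝ ℝ ℝ).toAffineMap
    simpa [Function.comp_def] using this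
  have hF : ConvexOn ℝ (univ : Set (ℝ × ℝ)) F := t1.add t2
  -- exp ∘ F is convex
  have hcomp : ConvexOn ℝ (univ : Set (ℝ × ℝ)) (fun q => Real.exp (F q)) := by
    refine ⟨convex_univ, fun x _ y _ a b ha hb hab => ?_⟩
    calc Real.exp (F (a • x + b • y)) ≤ Real.exp (a * F x + b * F y) := by
          apply Real.exp_le_exp.2
          simpa [smul_eq_mul] using hF.2 (mem_univ x) (mem_univ y) ha hb hab
      _ ≤ a * Real.exp (F x) + b * Real.exp (F y) := by
          simpa [smul_eq_mul] using
            convexOn_exp.2 (mem_univ (F x)) (mem_univ (F y)) ha hb hab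
  have hsmul : ConvexOn ℝ (univ : Set (ℝ × ℝ)) (fun q => a₀ * Real.exp (F q)) := by
    simpa [smul_eq_mul] using hcomp.smul ha₀.le
  convert hsmul using 1
  funext q
  have hL := L_pos hβ q.1
  rw [hFdef]
  simp only
  rw [hφ]
  rw [← sub_eq_add_neg, Real.exp_sub, Real.exp_log hL, mul_div_assoc]
end

section
/- For all real constants a₀ > 0, β > 0, and a₂ ∈ ℝ, the function (p, y) ↦ a₀·exp(p + a₂·y)/log(1 + β·exp(p)) is convex on ℝ² (jointly in the pair (p, y)). -/
open Real Set

private noncomputable def gfun : ℝ → ℝ := fun u => u / ((1 + u) * Real.log (1 + u))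

private lemma hasDerivAt_gfun {u : ℝ} (hu : 0 < u) :
    HasDerivAt gfun ((Real.log (1 + u) - u) / ((1 + u) * Real.log (1 + u))^2) u := by
  have h1 : (0:ℝ) < 1 + u := by linarith
  have hL : 0 < Real.log (1 + u) := Real.log_pos (by linarith)
  have hD : HasDerivAt (fun u : ℝ => (1 + u) * Real.log (1 + u))
      (1 * Real.log (1 + u) + (1 + u) * (1 / (1 + u))) u := by
    have hid : HasDerivAt (fun u : ℝ => 1 + u) 1 u := (hasDerivAt_id u).const_add 1
    have hlog : HasDerivAt (fun u : ℝ => Real.log (1 + u)) (1 / (1 + u)) u := by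
      simpa using hid.log h1.ne'
    exact hid.mul hlog
  have hDne : (1 + u) * Real.log (1 + u) ≠ 0 := by positivity
  have := (hasDerivAt_id u).div hD hDne
  refine this.congr_deriv ?_
  field_simp
  simp only [id_eq]
  ring

private lemma gfun_antitone : AntitoneOn gfun (Set.Ioi 0) := by
  apply antitoneOn_of_deriv_nonpos (convex_Ioi 0)
  · intro u hu
    exact (hasDerivAt_gfun hu).continuousAt.continuousWithinAt
  · intro u hu
    rw [interior_Ioi] at hu
    exact (hasDerivAt_gfun hu).differentiableAt.differentiableWithinAt
  · intro u hu
    rw [interior_Ioi] at hu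
    rw [(hasDerivAt_gfun hu).deriv]
    have h1 : (0:ℝ) < 1 + u := by linarith [Set.mem_Ioi.mp hu]
    have hL : 0 < Real.log (1 + u) := Real.log_pos (by linarith [Set.mem_Ioi.mp hu])
    have hle : Real.log (1 + u) ≤ u := by
      have := Real.log_le_sub_one_of_pos h1
      linarith
    apply div_nonpos_of_nonpos_of_nonneg (by linarith) (by positivity)

private noncomputable def phi (β : ℝ) : ℝ → ℝ :=
  fun p => p - Real.log (Real.log (1 + β * Real.exp p))

private lemma hasDerivAt_phi_s5 {β : ℝ} (hβ : 0 < β) (p : ℝ) :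
    HasDerivAt (phi β) (1 - gfun (β * Real.exp p)) p := by
  have he : 0 < β * Real.exp p := by positivity
  have h1 : (0:ℝ) < 1 + β * Real.exp p := by linarith
  have hL : 0 < Real.log (1 + β * Real.exp p) := Real.log_pos (by linarith)
  have hin : HasDerivAt (fun p : ℝ => 1 + β * Real.exp p) (β * Real.exp p) p :=
    ((Real.hasDerivAt_exp p).const_mul β).const_add 1
  have h2 : HasDerivAt (fun p : ℝ => Real.log (1 + β * Real.exp p))
      (β * Real.exp p / (1 + β * Real.exp p)) p := hin.log h1.ne'
  have h3 : HasDerivAt (fun p : ℝ => Real.log (Real.log (1 + β * Real.exp p)))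
      (β * Real.exp p / (1 + β * Real.exp p) / Real.log (1 + β * Real.exp p)) p :=
    h2.log hL.ne'
  have := (hasDerivAt_id p).sub h3
  refine this.congr_deriv ?_
  simp [gfun, div_div]

private lemma phi_convex {β : ℝ} (hβ : 0 < β) : ConvexOn ℝ Set.univ (phi β) := by
  have hdiff : Differentiable ℝ (phi β) := fun p => (hasDerivAt_phi_s5 hβ p).differentiableAt
  apply Monotone.convexOn_univ_of_deriv hdiff
  intro p q hpq
  rw [(hasDerivAt_phi_s5 hβ p).deriv, (hasDerivAt_phi_s5 hβ q).deriv]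
  have h1 : β * Real.exp p ∈ Set.Ioi (0:ℝ) := Set.mem_Ioi.mpr (by positivity)
  have h2 : β * Real.exp q ∈ Set.Ioi (0:ℝ) := Set.mem_Ioi.mpr (by positivity)
  have : gfun (β * Real.exp q) ≤ gfun (β * Real.exp p) :=
    gfun_antitone h1 h2 (by gcongr)
  linarith

/-- Joint convexity of `(p, y) ↦ a₀·e^{p + a₂ y} / log(1 + β e^{p})` on `ℝ²`
(the case `a₁ = 1` in Proposition 2 of the paper). -/
theorem convexOn_exp_add_div_log_one_add_exp (a₀ β a₂ : ℝ) (ha₀ : 0 < a₀) (hβ : 0 < β) :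
    ConvexOn ℝ (Set.univ : Set (ℝ × ℝ))
      (fun q : ℝ × ℝ => a₀ * Real.exp (q.1 + a₂ * q.2) / Real.log (1 + β * Real.exp q.1)) := by
  have hL : ∀ p : ℝ, 0 < Real.log (1 + β * Real.exp p) := fun p =>
    Real.log_pos (by nlinarith [Real.exp_pos p])
  -- rewrite as a₀ * exp (phi β p + a₂ * y)
  have hrw : ∀ q : ℝ × ℝ, a₀ * Real.exp (q.1 + a₂ * q.2) / Real.log (1 + β * Real.exp q.1)
      = a₀ * Real.exp (phi β q.1 + a₂ * q.2) := by
    intro q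
    rw [phi]
    rw [show q.1 - Real.log (Real.log (1 + β * Real.exp q.1)) + a₂ * q.2
      = (q.1 + a₂ * q.2) - Real.log (Real.log (1 + β * Real.exp q.1)) by ring]
    rw [Real.exp_sub, Real.exp_log (hL q.1)]
    ring
  simp only [hrw]
  have hphi := phi_convex hβ
  constructor
  · exact convex_univ
  · rintro x - y - a b ha hb hab
    simp only [Prod.smul_fst, Prod.smul_snd, Prod.fst_add, Prod.snd_add, smul_eq_mul]
    have hΦ : phi β (a * x.1 + b * y.1) + a₂ * (a * x.2 + b * y.2)
        ≤ a * (phi β x.1 + a₂ * x.2) + b * (phi β y.1 + a₂ * y.2) := by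
      have := hphi.2 (Set.mem_univ x.1) (Set.mem_univ y.1) ha hb hab
      simp only [smul_eq_mul] at this
      nlinarith [this]
    calc a₀ * Real.exp (phi β (a * x.1 + b * y.1) + a₂ * (a * x.2 + b * y.2))
        ≤ a₀ * Real.exp (a * (phi β x.1 + a₂ * x.2) + b * (phi β y.1 + a₂ * y.2)) := by
          exact mul_le_mul_of_nonneg_left (Real.exp_le_exp.mpr hΦ) ha₀.le
      _ ≤ a₀ * (a * Real.exp (phi β x.1 + a₂ * x.2) + b * Real.exp (phi β y.1 + a₂ * y.2)) := by
          have := convexOn_exp.2 (Set.mem_univ (phi β x.1 + a₂ * x.2))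
            (Set.mem_univ (phi β y.1 + a₂ * y.2)) ha hb hab
          simp only [smul_eq_mul] at this
          nlinarith [this]
      _ = a * (a₀ * Real.exp (phi β x.1 + a₂ * x.2)) + b * (a₀ * Real.exp (phi β y.1 + a₂ * y.2)) := by ring
end

section
/- For every real u > 0, the inequality (1 + u)²·(log(1 + u))² − (3u + 2u²)·log(1 + u) + 2u² > 0 holds, where log denotes the natural logarithm. -/
lemma log_lower (u : ℝ) (hu : 0 < u) : 2 * u / (2 + u) < Real.log (1 + u) := by
  set f : ℝ → ℝ := fun x => Real.log (1 + x) - (2 - 4 / (2 + x)) with hf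
  have hderiv : ∀ x ∈ interior (Set.Ici (0:ℝ)), 0 < deriv f x := by
    intro x hx
    rw [interior_Ici] at hx
    have hx0 : (0:ℝ) < x := hx
    have h1 : (1 + x) ≠ 0 := by linarith
    have h2 : (2 + x) ≠ 0 := by linarith
    have d1 : HasDerivAt (fun x : ℝ => Real.log (1 + x)) (1 / (1 + x)) x := by
      have := ((hasDerivAt_id x).const_add 1).log h1
      simpa using this
    have d2 : HasDerivAt (fun x : ℝ => 2 - 4 / (2 + x)) (4 / (2 + x) ^ 2) x := by
      have h := (hasDerivAt_const x (4:ℝ)).div ((hasDerivAt_id x).const_add 2) h2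
      have h' := h.const_sub 2
      convert h' using 1
      all_goals (try rfl)
      simp; ring
    have d : HasDerivAt f (1 / (1 + x) - 4 / (2 + x) ^ 2) x := d1.sub d2
    rw [d.deriv]
    rw [sub_pos, div_lt_div_iff₀ (by positivity) (by positivity)]
    nlinarith [sq_nonneg x]
  have hcont : ContinuousOn f (Set.Ici 0) := by
    apply ContinuousOn.sub
    · apply ContinuousOn.log (by fun_prop)
      intro x hx; simp at hx; intro h; linarith
    · apply ContinuousOn.sub continuousOn_const
      apply ContinuousOn.div continuousOn_const (by fun_prop)
      intro x hx; simp at hx; intro h; linarith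
  have hmono : StrictMonoOn f (Set.Ici 0) :=
    strictMonoOn_of_deriv_pos (convex_Ici 0) hcont hderiv
  have h0 : f 0 < f u := hmono (Set.mem_Ici.mpr (le_refl 0)) (Set.mem_Ici.mpr (le_of_lt hu)) hu
  have hf0 : f 0 = 0 := by norm_num [hf]
  have : 2 - 4 / (2 + u) = 2 * u / (2 + u) := by
    field_simp
    ring
  rw [hf0, hf] at h0
  simp only at h0
  linarith [h0, this.symm.le]

/-- The inequality `Hₐ(u) > 0` from the proof of Proposition 2:
`(1+u)²·(log(1+u))² − (3u + 2u²)·log(1+u) + 2u² > 0` for all `u > 0`. -/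
theorem Ha_pos (u : ℝ) (hu : 0 < u) :
    0 < (1 + u) ^ 2 * (Real.log (1 + u)) ^ 2 -
      (3 * u + 2 * u ^ 2) * Real.log (1 + u) + 2 * u ^ 2 := by
  set L := Real.log (1 + u) with hL
  have hLpos : 0 < L := Real.log_pos (by linarith)
  have hL1 : L < u := by
    have := Real.log_lt_sub_one_of_pos (x := 1 + u) (by linarith) (by linarith)
    linarith
  have h2 : 2 * u < L * (2 + u) := by
    have := log_lower u hu
    rw [div_lt_iff₀ (by linarith)] at this
    linarith
  -- A := (1+u)L - u, B := 2u - (1+u)L, E = A * (-B) + u^2 * L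
  have hA : 0 < (1 + u) * L - u := by nlinarith
  have hAu : (1 + u) * L - u < u ^ 2 := by nlinarith
  have hBL : 2 * u - (1 + u) * L < L := by linarith
  rcases le_or_gt (2 * u - (1 + u) * L) 0 with hB | hB
  · nlinarith [mul_nonneg hA.le (neg_nonneg.mpr hB)]
  · have h3 : ((1 + u) * L - u) * (2 * u - (1 + u) * L) ≤ u ^ 2 * (2 * u - (1 + u) * L) :=
      mul_le_mul_of_nonneg_right hAu.le hB.le
    have h4 : u ^ 2 * (2 * u - (1 + u) * L) < u ^ 2 * L :=
      mul_lt_mul_of_pos_left hBL (by positivity)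
    nlinarith [h3, h4, mul_pos (sq_pos_of_pos hu) hLpos]
end

section
/- For every real u with 0 < u ≤ (√2 − 1)/2, the inequality 2·(1 + u)² < 3 + 2u − √(2 − (1 + 2u)²) holds. (Note that (1 + 2u)² ≤ 2 on this range, so the square root is real.) -/
/-- Auxiliary inequality from the proof of Proposition 2: for
`0 < u ≤ (√2 − 1)/2` one has `2(1 + u)² < 3 + 2u − √(2 − (1 + 2u)²)`. -/
theorem aux_root_inequality (u : ℝ) (hu : 0 < u)
    (hu2 : u ≤ (Real.sqrt 2 - 1) / 2) :
    2 * (1 + u) ^ 2 < 3 + 2 * u - Real.sqrt (2 - (1 + 2 * u) ^ 2) := by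
  have hs2 : Real.sqrt 2 < 1.5 := by
    nlinarith [Real.sq_sqrt (by norm_num : (2:ℝ) ≥ 0), Real.sqrt_nonneg 2]
  have hu4 : u < 0.25 := by linarith
  have hpos : 0 < 3 + 2 * u - 2 * (1 + u) ^ 2 := by nlinarith
  have key : Real.sqrt (2 - (1 + 2 * u) ^ 2) < 3 + 2 * u - 2 * (1 + u) ^ 2 := by
    rw [show (3 + 2 * u - 2 * (1 + u) ^ 2) = (1 - 2*u - 2*u^2) by ring] at hpos ⊢
    rw [Real.sqrt_lt' hpos]
    nlinarith [sq_nonneg u, pow_pos hu 3]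
  linarith
end

section
/- For every real constant β > 0, the function p ↦ log(log(1 + β·exp(p))) is concave on ℝ, where log denotes the natural logarithm. -/
open Real Set

/-- `φ(u) = (1+u)·log(1+u)/u` has derivative `(u − log(1+u))/u²` at `u > 0`. -/
lemma hasDerivAt_phi_s8 {u : ℝ} (hu : 0 < u) :
    HasDerivAt (fun u : ℝ => (1 + u) * Real.log (1 + u) / u)
      ((u - Real.log (1 + u)) / u ^ 2) u := by
  have h1 : (0:ℝ) < 1 + u := by linarith
  have hN : HasDerivAt (fun u : ℝ => (1 + u) * Real.log (1 + u))
      (Real.log (1 + u) + 1) u := by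
    have ha : HasDerivAt (fun u : ℝ => 1 + u) 1 u :=
      (hasDerivAt_id u).const_add 1
    have hb : HasDerivAt (fun u : ℝ => Real.log (1 + u)) (1 / (1 + u)) u := by
      simpa [Function.comp_def] using (Real.hasDerivAt_log h1.ne').comp u ha
    have := ha.mul hb
    refine this.congr_deriv ?_
    rw [mul_one_div_cancel h1.ne']; ring
  have := hN.div (hasDerivAt_id u) hu.ne'
  refine this.congr_deriv ?_
  simp only [id]
  ring

/-- `φ` is strictly monotone on `(0,∞)`. -/
lemma strictMonoOn_phi :
    StrictMonoOn (fun u : ℝ => (1 + u) * Real.log (1 + u) / u) (Set.Ioi 0) := by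
  have hint : interior (Set.Ioi (0:ℝ)) = Set.Ioi 0 := interior_Ioi
  apply strictMonoOn_of_deriv_pos (convex_Ioi 0)
  · apply ContinuousOn.div
    · exact (continuousOn_const.add continuousOn_id).mul
        (Real.continuousOn_log.comp (continuousOn_const.add continuousOn_id)
          (fun x hx => by simp only [Set.mem_Ioi] at hx; simp; positivity))
    · exact continuousOn_id
    · exact fun x hx => ne_of_gt hx
  · intro x hx
    rw [hint] at hx
    have hx : (0:ℝ) < x := hx
    rw [(hasDerivAt_phi_s8 hx).deriv]
    have hlog : Real.log (1 + x) < x := by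
      have := Real.log_lt_sub_one_of_pos (x := 1 + x) (by linarith) (by linarith)
      linarith
    exact div_pos (by linarith) (by positivity)

/-- Log-concavity of `p ↦ log(1 + β e^{p})`: the function
`p ↦ log(log(1 + β e^{p}))` is concave on `ℝ`. -/
theorem concaveOn_log_log_one_add_exp (β : ℝ) (hβ : 0 < β) :
    ConcaveOn ℝ (Set.univ : Set ℝ)
      (fun p : ℝ => Real.log (Real.log (1 + β * Real.exp p))) := by
  set g : ℝ → ℝ := fun p => Real.log (Real.log (1 + β * Real.exp p)) with hg
  set h : ℝ → ℝ := fun u => u / ((1 + u) * Real.log (1 + u)) with hh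
  have key : ∀ p : ℝ, HasDerivAt g (h (β * Real.exp p)) p := by
    intro p
    have hu : 0 < β * Real.exp p := by positivity
    have h1 : (0:ℝ) < 1 + β * Real.exp p := by linarith
    have hL : 0 < Real.log (1 + β * Real.exp p) :=
      Real.log_pos (by linarith)
    have ha : HasDerivAt (fun p : ℝ => 1 + β * Real.exp p) (β * Real.exp p) p := by
      simpa using ((Real.hasDerivAt_exp p).const_mul β).const_add 1
    have hb : HasDerivAt (fun p : ℝ => Real.log (1 + β * Real.exp p))
        (β * Real.exp p / (1 + β * Real.exp p)) p := by
      simpa [div_eq_mul_inv, mul_comm, Function.comp_def] using (Real.hasDerivAt_log h1.ne').comp p ha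
    have hc := (Real.hasDerivAt_log hL.ne').comp p hb
    refine hc.congr_deriv ?_
    show _ = (β * Real.exp p) / ((1 + β * Real.exp p) * Real.log (1 + β * Real.exp p))
    field_simp
  have hderiv : deriv g = fun p => h (β * Real.exp p) :=
    funext fun p => (key p).deriv
  have hanti : AntitoneOn (deriv g) (interior (Set.univ : Set ℝ)) := by
    intro a _ b _ hab
    rw [hderiv]
    show h (β * Real.exp b) ≤ h (β * Real.exp a)
    have hua : 0 < β * Real.exp a := by positivity
    have hub : 0 < β * Real.exp b := by positivity
    have huab : β * Real.exp a ≤ β * Real.exp b :=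
      mul_le_mul_of_nonneg_left (Real.exp_le_exp.2 hab) hβ.le
    -- h u = 1/φ u with φ strictly monotone
    have hφ : ∀ u : ℝ, 0 < u → h u = 1 / ((1 + u) * Real.log (1 + u) / u) := by
      intro u hu
      have hL : 0 < Real.log (1 + u) := Real.log_pos (by linarith)
      rw [hh]
      field_simp
    rw [hφ _ hua, hφ _ hub]
    have hφpos : ∀ u : ℝ, 0 < u → 0 < (1 + u) * Real.log (1 + u) / u := by
      intro u hu
      have hL : 0 < Real.log (1 + u) := Real.log_pos (by linarith)
      positivity
    apply one_div_le_one_div_of_le (hφpos _ hua)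
    rcases eq_or_lt_of_le huab with heq | hlt
    · rw [heq]
    · exact (strictMonoOn_phi hua hub hlt).le
  have hdiff : DifferentiableOn ℝ g (interior (Set.univ : Set ℝ)) :=
    fun x _ => (key x).differentiableAt.differentiableWithinAt
  have hcont : ContinuousOn g (Set.univ : Set ℝ) :=
    fun x _ => (key x).differentiableAt.continuousAt.continuousWithinAt
  exact AntitoneOn.concaveOn_of_deriv convex_univ hcont hdiff hanti
end

section
/- Let wE, wT, α, β, b, p₀ be positive reals, let c₀, c₁, g₁, g₃, h₁, h₃ be nonnegative reals, and let g₂, h₂ be arbitrary reals. Then the function of (ω̃, f̃ᵤ, f̃ 𝒻, p̃, ρ̃) ∈ ℝ⁵ given by Ξ̃ = wE·b·(e^{p̃ − ω̃} + p₀·e^{−ω̃})/log(1 + β·e^{p̃}) + wE·α·((c₀ + g₃)·e^{2f̃ᵤ} + g₁·e^{2f̃ᵤ + g₂·ω̃}) + wT·( b·e^{−ω̃ − ρ̃}/log(1 + β·e^{p̃}) + (c₀ + g₃)·e^{−f̃ᵤ} + g₁·e^{−f̃ᵤ + g₂·ω̃} + (c₁ + h₃)·e^{−f̃ 𝒻}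 + h₁·e^{−f̃ 𝒻 + h₂·ω̃} ) is convex on ℝ⁵, where log denotes the natural logarithm. -/
open Real Set in

lemma phi_convex_s9 (β : ℝ) (hβ : 0 < β) :
    ConvexOn ℝ (Set.univ : Set ℝ)
      (fun p => -Real.log (Real.log (1 + β * Real.exp p))) := by
  have hE : ∀ p : ℝ, (0:ℝ) < 1 + β * Real.exp p := fun p => by positivity
  have hE1 : ∀ p : ℝ, (1:ℝ) < 1 + β * Real.exp p := fun p => by
    nlinarith [Real.exp_pos p]
  have hL : ∀ p : ℝ, 0 < Real.log (1 + β * Real.exp p) := fun p => Real.log_pos (hE1 p)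
  have hdE : ∀ p : ℝ, HasDerivAt (fun p => 1 + β * Real.exp p) (β * Real.exp p) p := by
    intro p
    simpa using ((Real.hasDerivAt_exp p).const_mul β).const_add 1
  have hdL : ∀ p : ℝ, HasDerivAt (fun p => Real.log (1 + β * Real.exp p))
      (β * Real.exp p / (1 + β * Real.exp p)) p :=
    fun p => (hdE p).log (ne_of_gt (hE p))
  have hdφ : ∀ p : ℝ, HasDerivAt (fun p => -Real.log (Real.log (1 + β * Real.exp p)))
      (-(β * Real.exp p / (1 + β * Real.exp p) / Real.log (1 + β * Real.exp p))) p :=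
    fun p => ((hdL p).log (ne_of_gt (hL p))).neg
  have hderiv : deriv (fun p => -Real.log (Real.log (1 + β * Real.exp p)))
      = fun p => -(β * Real.exp p / (1 + β * Real.exp p) / Real.log (1 + β * Real.exp p)) :=
    funext fun p => (hdφ p).deriv
  -- derivative of the inner quotient β e^p / (1 + β e^p)
  have hdq : ∀ p : ℝ, HasDerivAt (fun p => β * Real.exp p / (1 + β * Real.exp p))
      ((β * Real.exp p * (1 + β * Real.exp p) - β * Real.exp p * (β * Real.exp p)) /
        (1 + β * Real.exp p) ^ 2) p := by
    intro p
    exact ((Real.hasDerivAt_exp p).const_mul β).div (hdE p) (ne_of_gt (hE p))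
  have hdψ : ∀ p : ℝ, HasDerivAt
      (fun p => -(β * Real.exp p / (1 + β * Real.exp p) / Real.log (1 + β * Real.exp p)))
      (-(((β * Real.exp p * (1 + β * Real.exp p) - β * Real.exp p * (β * Real.exp p)) /
            (1 + β * Real.exp p) ^ 2 * Real.log (1 + β * Real.exp p)
          - β * Real.exp p / (1 + β * Real.exp p) *
            (β * Real.exp p / (1 + β * Real.exp p))) /
        Real.log (1 + β * Real.exp p) ^ 2)) p :=
    fun p => ((hdq p).div (hdL p) (ne_of_gt (hL p))).neg
  apply convexOn_univ_of_deriv2_nonneg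
  · exact fun p => (hdφ p).differentiableAt
  · rw [hderiv]; exact fun p => (hdψ p).differentiableAt
  · intro p
    have h2 : deriv^[2] (fun p => -Real.log (Real.log (1 + β * Real.exp p))) p
        = -(((β * Real.exp p * (1 + β * Real.exp p) - β * Real.exp p * (β * Real.exp p)) /
            (1 + β * Real.exp p) ^ 2 * Real.log (1 + β * Real.exp p)
          - β * Real.exp p / (1 + β * Real.exp p) *
            (β * Real.exp p / (1 + β * Real.exp p))) /
        Real.log (1 + β * Real.exp p) ^ 2) := by
      rw [Function.iterate_succ, Function.iterate_one, Function.comp_apply, hderiv]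
      exact (hdψ p).deriv
    rw [h2]
    set u := β * Real.exp p with hu
    have hu0 : 0 < u := by positivity
    have hlog : Real.log (1 + u) ≤ u := by
      have := Real.log_le_sub_one_of_pos (hE p)
      linarith
    set ℓ := Real.log (1 + u) with hℓ
    have hℓ0 : 0 < ℓ := hL p
    have hnum : (u * (1 + u) - u * u) / (1 + u) ^ 2 * ℓ - u / (1 + u) * (u / (1 + u)) ≤ 0 := by
      have hE2 : (0:ℝ) < (1 + u) ^ 2 := by positivity
      rw [div_mul_eq_mul_div, div_mul_div_comm, div_sub_div _ _ (ne_of_gt hE2) (by positivity),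
        div_nonpos_iff]
      right
      constructor
      · nlinarith [mul_nonneg (mul_nonneg hu0.le hE2.le) (sub_nonneg.2 hlog)]
      · positivity
    have := div_nonpos_of_nonpos_of_nonneg hnum (sq_nonneg ℓ)
    linarith

abbrev V5 := ℝ × ℝ × ℝ × ℝ × ℝ

open Real Set in
/-- composing a convex exponent with `c * exp` preserves convexity -/
lemma expcomp_convex (c : ℝ) (hc : 0 ≤ c) (g : V5 → ℝ)
    (hg : ConvexOn ℝ (Set.univ : Set V5) g) :
    ConvexOn ℝ (Set.univ : Set V5) (fun v => c * Real.exp (g v)) := by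
  refine ⟨convex_univ, fun x _ y _ a b ha hb hab => ?_⟩
  have h1 : g (a • x + b • y) ≤ a * g x + b * g y := by
    simpa [smul_eq_mul] using hg.2 (mem_univ x) (mem_univ y) ha hb hab
  have h2 : Real.exp (g (a • x + b • y)) ≤ Real.exp (a * g x + b * g y) :=
    Real.exp_le_exp.2 h1
  have h3 : Real.exp (a * g x + b * g y) ≤ a * Real.exp (g x) + b * Real.exp (g y) := by
    simpa [smul_eq_mul] using
      (convexOn_exp).2 (mem_univ (g x)) (mem_univ (g y)) ha hb hab
  simp only [smul_eq_mul]
  calc c * Real.exp (g (a • x + b • y)) ≤ c * (a * Real.exp (g x) + b * Real.exp (g y)) := by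
        exact mul_le_mul_of_nonneg_left (h2.trans h3) hc
    _ = a * (c * Real.exp (g x)) + b * (c * Real.exp (g y)) := by ring

open Real Set in
lemma phi_proj_convex (β : ℝ) (hβ : 0 < β) :
    ConvexOn ℝ (Set.univ : Set V5)
      (fun v => -Real.log (Real.log (1 + β * Real.exp v.2.2.2.1))) := by
  refine ⟨convex_univ, fun x _ y _ a b ha hb hab => ?_⟩
  have h := (phi_convex_s9 β hβ).2 (mem_univ x.2.2.2.1) (mem_univ y.2.2.2.1) ha hb hab
  simp only [smul_eq_mul, Prod.smul_fst, Prod.smul_snd, Prod.fst_add, Prod.snd_add,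
    Prod.smul_mk, Prod.mk_add_mk] at h ⊢
  simpa [smul_eq_mul] using h

open Real Set in
/-- convexity of a linear functional plus optional `φ∘π₄` term -/
lemma lin_phi_convex (β : ℝ) (hβ : 0 < β) (a₁ a₂ a₃ a₄ a₅ t : ℝ) (ht : 0 ≤ t) :
    ConvexOn ℝ (Set.univ : Set V5)
      (fun v => a₁ * v.1 + a₂ * v.2.1 + a₃ * v.2.2.1 + a₄ * v.2.2.2.1 + a₅ * v.2.2.2.2
        + t * (-Real.log (Real.log (1 + β * Real.exp v.2.2.2.1)))) := by
  refine ⟨convex_univ, fun x _ y _ a b ha hb hab => ?_⟩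
  have h := (phi_proj_convex β hβ).2 (mem_univ x) (mem_univ y) ha hb hab
  simp only [smul_eq_mul, Prod.smul_fst, Prod.smul_snd, Prod.fst_add, Prod.snd_add] at h ⊢
  nlinarith [mul_le_mul_of_nonneg_left h ht]

/-- Proposition 2: after the logarithmic change of variables, the weighted
energy-and-delay cost `Ξ̃` of a user whose task is executed at the fog server
is jointly convex in `(ω̃, f̃ᵤ, f̃𝒻, p̃, ρ̃) ∈ ℝ⁵`. -/
theorem convexOn_transformed_WEDC (wE wT α β b p₀ c₀ c₁ g₁ g₃ h₁ h₃ g₂ h₂ : ℝ)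
    (hwE : 0 < wE) (hwT : 0 < wT) (hα : 0 < α) (hβ : 0 < β) (hb : 0 < b)
    (hp₀ : 0 < p₀) (hc₀ : 0 ≤ c₀) (hc₁ : 0 ≤ c₁) (hg₁ : 0 ≤ g₁) (hg₃ : 0 ≤ g₃)
    (hh₁ : 0 ≤ h₁) (hh₃ : 0 ≤ h₃) :
    ConvexOn ℝ (Set.univ : Set (ℝ × ℝ × ℝ × ℝ × ℝ))
      (fun v : ℝ × ℝ × ℝ × ℝ × ℝ =>
        wE * b * (Real.exp (v.2.2.2.1 - v.1) + p₀ * Real.exp (-v.1)) /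
            Real.log (1 + β * Real.exp v.2.2.2.1) +
          wE * α * ((c₀ + g₃) * Real.exp (2 * v.2.1) +
            g₁ * Real.exp (2 * v.2.1 + g₂ * v.1)) +
          wT * (b * Real.exp (-v.1 - v.2.2.2.2) /
              Real.log (1 + β * Real.exp v.2.2.2.1) +
            (c₀ + g₃) * Real.exp (-v.2.1) + g₁ * Real.exp (-v.2.1 + g₂ * v.1) +
            (c₁ + h₃) * Real.exp (-v.2.2.1) + h₁ * Real.exp (-v.2.2.1 + h₂ * v.1))) := by
  have hL : ∀ p : ℝ, 0 < Real.log (1 + β * Real.exp p) := fun p =>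
    Real.log_pos (by nlinarith [Real.exp_pos p])
  have T1 := expcomp_convex (wE * b) (by positivity) _
    (lin_phi_convex β hβ (-1) 0 0 1 0 1 zero_le_one)
  have T2 := expcomp_convex (wE * b * p₀) (by positivity) _
    (lin_phi_convex β hβ (-1) 0 0 0 0 1 zero_le_one)
  have T3 := expcomp_convex (wE * α * (c₀ + g₃)) (by positivity) _
    (lin_phi_convex β hβ 0 2 0 0 0 0 le_rfl)
  have T4 := expcomp_convex (wE * α * g₁) (by positivity) _
    (lin_phi_convex β hβ g₂ 2 0 0 0 0 le_rfl)
  have T5 := expcomp_convex (wT * b) (by positivity) _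
    (lin_phi_convex β hβ (-1) 0 0 0 (-1) 1 zero_le_one)
  have T6 := expcomp_convex (wT * (c₀ + g₃)) (by positivity) _
    (lin_phi_convex β hβ 0 (-1) 0 0 0 0 le_rfl)
  have T7 := expcomp_convex (wT * g₁) (by positivity) _
    (lin_phi_convex β hβ g₂ (-1) 0 0 0 0 le_rfl)
  have T8 := expcomp_convex (wT * (c₁ + h₃)) (by positivity) _
    (lin_phi_convex β hβ 0 0 (-1) 0 0 0 le_rfl)
  have T9 := expcomp_convex (wT * h₁) (by positivity) _
    (lin_phi_convex β hβ h₂ 0 (-1) 0 0 0 le_rfl)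
  have hsum := ((((((((T1.add T2).add T3).add T4).add T5).add T6).add T7).add T8).add T9)
  convert hsum using 1
  · rfl
  funext v
  simp only [Pi.add_apply]
  simp only [one_mul, zero_mul, neg_mul, add_zero, zero_add, Real.exp_add, Real.exp_sub,
    Real.exp_neg, Real.exp_log (hL v.2.2.2.1)]
  ring
end

section
/- Fix real parameters b > 0, ν > 0, γ₁ > 0, γ₃ > 0 and an exponent γ₂ ≤ 0. Then for every fixed d > 0, the function ω ↦ H₀(ω, d) = ω·d·(γ₁·ω^γ₂ + γ₃)/(ν·ω·d − b) is strictly decreasing on the interval { ω : ω > b/(ν·d) }, where ω^γ₂ denotes the real power. -/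
/-- Case `γ₂ ≤ 0` of Proposition 4: for fixed `d > 0` the function
`ω ↦ H₀(ω, d) = ω·d·(γ₁·ω^γ₂ + γ₃)/(ν·ω·d − b)` is strictly decreasing on
`{ω : ω > b/(ν·d)}`. -/
theorem H0_strictAntiOn_of_exponent_nonpos (b ν γ₁ γ₃ γ₂ : ℝ)
    (hb : 0 < b) (hν : 0 < ν) (hγ₁ : 0 < γ₁) (hγ₃ : 0 < γ₃) (hγ₂ : γ₂ ≤ 0)
    (d : ℝ) (hd : 0 < d) :
    StrictAntiOn (fun ω : ℝ => ω * d * (γ₁ * ω ^ γ₂ + γ₃) / (ν * ω * d - b))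
      (Set.Ioi (b / (ν * d))) := by
  intro x hx y hy hxy
  simp only [Set.mem_Ioi] at hx hy
  have hνd : 0 < ν * d := by positivity
  have hx0 : 0 < x := lt_trans (by positivity) hx
  have hy0 : 0 < y := lt_trans (by positivity) hy
  have hdx : 0 < ν * x * d - b := by
    have := (div_lt_iff₀ hνd).mp hx; nlinarith
  have hdy : 0 < ν * y * d - b := by
    have := (div_lt_iff₀ hνd).mp hy; nlinarith
  have hpow : y ^ γ₂ ≤ x ^ γ₂ :=
    Real.rpow_le_rpow_of_nonpos hx0 hxy.le hγ₂
  have hpy : 0 < y ^ γ₂ := Real.rpow_pos_of_pos hy0 _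
  have hG : 0 < γ₁ * y ^ γ₂ + γ₃ := by positivity
  have hkey : y * (ν * x * d - b) < x * (ν * y * d - b) := by nlinarith
  simp only
  rw [div_lt_div_iff₀ hdy hdx]
  nlinarith [mul_pos hy0 hdx, mul_le_mul_of_nonneg_left hpow (le_of_lt hγ₁),
    mul_lt_mul_of_pos_left hkey (mul_pos hd hG),
    mul_le_mul_of_nonneg_right (mul_le_mul_of_nonneg_left hpow hγ₁.le)
      (mul_pos hd (mul_pos hx0 hdy)).le]
end

section
/- Fix real parameters b > 0, ν > 0, γ₁ > 0, γ₃ > 0 and an exponent γ₂ > 0. Then for every d > 0 and every ω > b/(ν·d), the derivative at ω of the function ω ↦ H₀(ω, d) = ω·d·(γ₁·ω^γ₂ + γ₃)/(ν·ω·d − b) is negative if d < H₁(ω), equal to zero if d = H₁(ω), and positive if d > H₁(ω), where H₁(ω) = b·(γ₁·(γ₂+1)·ω^γ₂ + γ₃)/(γ₁·ν·γ₂·ω^(γ₂+1)). -/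
/-- Stationarity characterization in Proposition 4 (case `γ₂ > 0`): the sign of
`∂H₀/∂ω` is determined by comparing `d` with `H₁(ω)`. -/
theorem H0_deriv_sign_trichotomy (b ν γ₁ γ₃ γ₂ : ℝ)
    (hb : 0 < b) (hν : 0 < ν) (hγ₁ : 0 < γ₁) (hγ₃ : 0 < γ₃) (hγ₂ : 0 < γ₂)
    (d : ℝ) (hd : 0 < d) (ω : ℝ) (hω : b / (ν * d) < ω) :
    (d < b * (γ₁ * (γ₂ + 1) * ω ^ γ₂ + γ₃) / (γ₁ * ν * γ₂ * ω ^ (γ₂ + 1)) →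
      deriv (fun ω : ℝ => ω * d * (γ₁ * ω ^ γ₂ + γ₃) / (ν * ω * d - b)) ω < 0) ∧
    (d = b * (γ₁ * (γ₂ + 1) * ω ^ γ₂ + γ₃) / (γ₁ * ν * γ₂ * ω ^ (γ₂ + 1)) →
      deriv (fun ω : ℝ => ω * d * (γ₁ * ω ^ γ₂ + γ₃) / (ν * ω * d - b)) ω = 0) ∧
    (b * (γ₁ * (γ₂ + 1) * ω ^ γ₂ + γ₃) / (γ₁ * ν * γ₂ * ω ^ (γ₂ + 1)) < d →
      0 < deriv (fun ω : ℝ => ω * d * (γ₁ * ω ^ γ₂ + γ₃) / (ν * ω * d - b)) ω) := by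
  have hω0 : 0 < ω := lt_trans (div_pos hb (mul_pos hν hd)) hω
  have hDen : 0 < ν * ω * d - b := by
    have : b < ω * (ν * d) := (div_lt_iff₀ (mul_pos hν hd)).mp hω
    nlinarith
  -- derivative of the numerator
  have hg : HasDerivAt (fun ω : ℝ => ω * d * (γ₁ * ω ^ γ₂ + γ₃))
      (1 * d * (γ₁ * ω ^ γ₂ + γ₃) + ω * d * (γ₁ * (γ₂ * ω ^ (γ₂ - 1)))) ω := by
    exact ((hasDerivAt_id ω).mul_const d).mul
      ((((Real.hasDerivAt_rpow_const (p := γ₂) (Or.inl hω0.ne')).const_mul γ₁)).add_const γ₃)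
  -- derivative of the denominator
  have hh : HasDerivAt (fun ω : ℝ => ν * ω * d - b) (ν * 1 * d) ω := by
    exact (((hasDerivAt_id ω).const_mul ν).mul_const d).sub_const b
  have hf := hg.div hh hDen.ne'
  have hderiv : deriv (fun ω : ℝ => ω * d * (γ₁ * ω ^ γ₂ + γ₃) / (ν * ω * d - b)) ω
      = ((1 * d * (γ₁ * ω ^ γ₂ + γ₃) + ω * d * (γ₁ * (γ₂ * ω ^ (γ₂ - 1)))) * (ν * ω * d - b)
          - ω * d * (γ₁ * ω ^ γ₂ + γ₃) * (ν * 1 * d)) / (ν * ω * d - b) ^ 2 := hf.deriv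
  have e1 : ω ^ (γ₂ + 1) = ω ^ γ₂ * ω := by
    rw [Real.rpow_add hω0, Real.rpow_one]
  have e2 : ω ^ (γ₂ - 1) * ω = ω ^ γ₂ := by
    rw [← Real.rpow_add_one hω0.ne', sub_add_cancel]
  have hkey : deriv (fun ω : ℝ => ω * d * (γ₁ * ω ^ γ₂ + γ₃) / (ν * ω * d - b)) ω
      = d * (γ₁ * ν * γ₂ * ω ^ (γ₂ + 1) * d - b * (γ₁ * (γ₂ + 1) * ω ^ γ₂ + γ₃))
          / (ν * ω * d - b) ^ 2 := by
    rw [hderiv, e1, ← e2]; ring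
  have hA : 0 < γ₁ * ν * γ₂ * ω ^ (γ₂ + 1) :=
    mul_pos (mul_pos (mul_pos hγ₁ hν) hγ₂) (Real.rpow_pos_of_pos hω0 _)
  have hM : 0 < γ₁ * (γ₂ + 1) * ω ^ γ₂ + γ₃ := by
    have := Real.rpow_pos_of_pos hω0 γ₂
    positivity
  have hsq : 0 < (ν * ω * d - b) ^ 2 := by positivity
  refine ⟨?_, ?_, ?_⟩
  · intro h
    have h' : d * (γ₁ * ν * γ₂ * ω ^ (γ₂ + 1)) < b * (γ₁ * (γ₂ + 1) * ω ^ γ₂ + γ₃) :=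
      (lt_div_iff₀ hA).mp h
    rw [hkey]
    apply div_neg_of_neg_of_pos _ hsq
    nlinarith
  · intro h
    have h' : d * (γ₁ * ν * γ₂ * ω ^ (γ₂ + 1)) = b * (γ₁ * (γ₂ + 1) * ω ^ γ₂ + γ₃) := by
      field_simp [hA.ne'] at h; linarith
    rw [hkey]
    have : γ₁ * ν * γ₂ * ω ^ (γ₂ + 1) * d - b * (γ₁ * (γ₂ + 1) * ω ^ γ₂ + γ₃) = 0 := by
      linarith [h']
    rw [this]; simp
  · intro h
    have h' : b * (γ₁ * (γ₂ + 1) * ω ^ γ₂ + γ₃) < d * (γ₁ * ν * γ₂ * ω ^ (γ₂ + 1)) :=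
      (div_lt_iff₀ hA).mp h
    rw [hkey]
    apply div_pos _ hsq
    nlinarith
end

section
/- Fix real parameters b > 0, ν > 0, γ₁ > 0, γ₃ > 0 and an exponent γ₂ > 0. Then ν·ω·H₁(ω) − b > 0 for every ω > 0, and the composite function ω ↦ H₂(ω, H₁(ω)) = −b·ω·(γ₁·ω^γ₂ + γ₃)/(ν·ω·H₁(ω) − b)² is strictly decreasing on (0, ∞), where H₁(ω) = b·(γ₁·(γ₂+1)·ω^γ₂ + γ₃)/(γ₁·ν·γ₂·ω^(γ₂+1)) and ω^γ₂ denotes the real power. -/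
private lemma key_simp (b ν γ₁ γ₃ γ₂ ω : ℝ)
    (hν : 0 < ν) (hγ₁ : 0 < γ₁) (hγ₂ : 0 < γ₂) (hω : 0 < ω) :
    ν * ω * (b * (γ₁ * (γ₂ + 1) * ω ^ γ₂ + γ₃) /
        (γ₁ * ν * γ₂ * ω ^ (γ₂ + 1))) - b
      = b * (γ₁ * ω ^ γ₂ + γ₃) / (γ₁ * γ₂ * ω ^ γ₂) := by
  have hA : (0:ℝ) < ω ^ γ₂ := Real.rpow_pos_of_pos hω _
  rw [Real.rpow_add hω, Real.rpow_one]
  field_simp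
  ring

private lemma comp_simp (b ν γ₁ γ₃ γ₂ ω : ℝ)
    (hb : 0 < b) (hν : 0 < ν) (hγ₁ : 0 < γ₁) (hγ₃ : 0 < γ₃) (hγ₂ : 0 < γ₂)
    (hω : 0 < ω) :
    -(b * ω * (γ₁ * ω ^ γ₂ + γ₃)) /
        (ν * ω * (b * (γ₁ * (γ₂ + 1) * ω ^ γ₂ + γ₃) /
          (γ₁ * ν * γ₂ * ω ^ (γ₂ + 1))) - b) ^ 2
      = -(γ₁ ^ 2 * γ₂ ^ 2 * ((ω ^ γ₂) ^ 2 * ω) / (b * (γ₁ * ω ^ γ₂ + γ₃))) := by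
  have hA : (0:ℝ) < ω ^ γ₂ := Real.rpow_pos_of_pos hω _
  have hS : (0:ℝ) < γ₁ * ω ^ γ₂ + γ₃ := by positivity
  rw [key_simp b ν γ₁ γ₃ γ₂ ω hν hγ₁ hγ₂ hω]
  rw [div_pow]
  field_simp

/-- Substitution step in the proof of Lemma 4: along the stationary curve
`d = H₁(ω)`, one has `ν·ω·H₁(ω) − b > 0`, and the gradient
`ω ↦ H₂(ω, H₁(ω))` is strictly decreasing on `(0, ∞)`. -/
theorem H2_comp_H1_strictAntiOn (b ν γ₁ γ₃ γ₂ : ℝ)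
    (hb : 0 < b) (hν : 0 < ν) (hγ₁ : 0 < γ₁) (hγ₃ : 0 < γ₃) (hγ₂ : 0 < γ₂) :
    (∀ ω : ℝ, 0 < ω →
      0 < ν * ω * (b * (γ₁ * (γ₂ + 1) * ω ^ γ₂ + γ₃) /
        (γ₁ * ν * γ₂ * ω ^ (γ₂ + 1))) - b) ∧
    StrictAntiOn
      (fun ω : ℝ => -(b * ω * (γ₁ * ω ^ γ₂ + γ₃)) /
        (ν * ω * (b * (γ₁ * (γ₂ + 1) * ω ^ γ₂ + γ₃) /
          (γ₁ * ν * γ₂ * ω ^ (γ₂ + 1))) - b) ^ 2)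
      (Set.Ioi (0 : ℝ)) := by
  constructor
  · intro ω hω
    rw [key_simp b ν γ₁ γ₃ γ₂ ω hν hγ₁ hγ₂ hω]
    have hA : (0:ℝ) < ω ^ γ₂ := Real.rpow_pos_of_pos hω _
    positivity
  · intro x hx y hy hxy
    simp only [Set.mem_Ioi] at hx hy
    dsimp only
    rw [comp_simp b ν γ₁ γ₃ γ₂ x hb hν hγ₁ hγ₃ hγ₂ hx,
        comp_simp b ν γ₁ γ₃ γ₂ y hb hν hγ₁ hγ₃ hγ₂ hy]
    have hAx : (0:ℝ) < x ^ γ₂ := Real.rpow_pos_of_pos hx _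
    have hAy : (0:ℝ) < y ^ γ₂ := Real.rpow_pos_of_pos hy _
    have hAlt : x ^ γ₂ < y ^ γ₂ := Real.rpow_lt_rpow hx.le hxy hγ₂
    have hSx : (0:ℝ) < γ₁ * x ^ γ₂ + γ₃ := by positivity
    have hSy : (0:ℝ) < γ₁ * y ^ γ₂ + γ₃ := by positivity
    rw [neg_lt_neg_iff, div_lt_div_iff₀ (by positivity) (by positivity)]
    set u := x ^ γ₂ with hu
    set v := y ^ γ₂ with hv
    have huv : u * x < v * y := by nlinarith
    have h1 : u ^ 2 * x * v < v ^ 2 * y * u := by nlinarith [mul_pos hAx hAy]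
    have h2 : u ^ 2 * x < v ^ 2 * y := by
      nlinarith [mul_lt_mul_of_pos_left huv hAx, mul_pos (sub_pos.mpr hAlt) (mul_pos hAy hy)]
    have c1 : (0:ℝ) < γ₁ ^ 3 * γ₂ ^ 2 * b := by positivity
    have c2 : (0:ℝ) < γ₁ ^ 2 * γ₂ ^ 2 * b * γ₃ := by positivity
    nlinarith [mul_lt_mul_of_pos_left h1 c1, mul_lt_mul_of_pos_left h2 c2]
end
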